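/- arXiv:2503.16891 — 3 statements merged into one kernel-verified Lean document; each statement's English description precedes it below -/
import Mathlib

section
/- Let Σ be an alphabet and let S, K, N ⊆ Σ^ω be languages of infinite words with L(S) ⊆ L(K) (here N plays the role of L(¬φ)). For any language B ⊆ Σ^ω satisfying N ∩ K ⊆ B ⊆ N ∪ (Σ^ω \ K), we have S ∩ N = ∅ if and only if S ∩ B = ∅. -/
/-- Theorem 1 of the paper: given prior knowledge `K` over-approximating the
system `S` (`S ⊆ K`), the negated-property language `N` may be replaced by any
language `B` between the restriction `N ∩ K` and the relaxation `N ∪ Kᶜ`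
without changing the outcome of the emptiness test. -/
theorem emptiness_given_knowledge {α : Type*} (S K N B : Set (ℕ → α))
    (hSK : S ⊆ K) (hlow : N ∩ K ⊆ B) (hhigh : B ⊆ N ∪ (Set.univ \ K)) :
    S ∩ N = ∅ ↔ S ∩ B = ∅ := by
  simp only [Set.eq_empty_iff_forall_notMem]
  constructor
  · rintro h x ⟨hxS, hxB⟩
    rcases hhigh hxB with hN | ⟨_, hK⟩
    · exact h x ⟨hxS, hN⟩
    · exact hK (hSK hxS)
  · rintro h x ⟨hxS, hxN⟩
    exact h x ⟨hxS, hlow ⟨hxN, hSK hxS⟩⟩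
end

section
/- Let Σ be an alphabet, ~ the stutter-equivalence relation on ω-words over Σ, and ss(L) the stutter-sensitive part of a language L. Let L, K ⊆ Σ^ω be languages. If ss(L) ∩ K = ∅, then (L \ ss(L)) ∩ K = L ∩ K. Moreover, the language L \ ss(L) is stutter-insensitive. (SI-restriction: when the stutter-sensitive words of L lie outside the knowledge K, removing them yields a stutter-insensitive language with the same intersection with K.) -/
variable {α : Type*}

/-- One-step duplication of the letter of `w` at position `i`. -/
def dup (w : ℕ → α) (i : ℕ) : ℕ → α := fun n => if n ≤ i then w n else w (n - 1)

/-- Stutter equivalence: the equivalence closure of one-step duplication. -/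
def StutterEquiv (w w' : ℕ → α) : Prop :=
  Relation.EqvGen (fun u v => ∃ i, v = dup u i) w w'

/-- A language is stutter-insensitive if it is closed under stutter equivalence. -/
def StutterInsensitive (L : Set (ℕ → α)) : Prop :=
  ∀ w w', w ∈ L → StutterEquiv w w' → w' ∈ L

/-- The stutter closure of a language. -/
def stutterClosure (L : Set (ℕ → α)) : Set (ℕ → α) :=
  {w | ∃ w' ∈ L, StutterEquiv w w'}

/-- The stutter-sensitive part of a language. -/
def stutterSensitivePart (L : Set (ℕ → α)) : Set (ℕ → α) :=
  {w | w ∈ L ∧ ∃ w', StutterEquiv w w' ∧ w' ∉ L}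

/-- SI-restriction: if the stutter-sensitive words of `L` lie outside the
knowledge `K`, removing them yields a stutter-insensitive language with the
same intersection with `K`. -/
theorem si_restriction (L K : Set (ℕ → α))
    (h : stutterSensitivePart L ∩ K = ∅) :
    (L \ stutterSensitivePart L) ∩ K = L ∩ K ∧
      StutterInsensitive (L \ stutterSensitivePart L) := by
  constructor
  · ext w
    simp only [Set.mem_inter_iff, Set.mem_diff]
    constructor
    · rintro ⟨⟨hL, _⟩, hK⟩; exact ⟨hL, hK⟩
    · rintro ⟨hL, hK⟩
      refine ⟨⟨hL, fun hs => ?_⟩, hK⟩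
      have : w ∈ stutterSensitivePart L ∩ K := ⟨hs, hK⟩
      rw [h] at this; exact this
  · rintro w w' ⟨hwL, hws⟩ hww'
    have hall : ∀ u, StutterEquiv w u → u ∈ L := by
      intro u hu
      by_contra hnu
      exact hws ⟨hwL, u, hu, hnu⟩
    have hw'L : w' ∈ L := hall w' hww'
    refine ⟨hw'L, fun hs => ?_⟩
    obtain ⟨_, u, hu, hnu⟩ := hs
    exact hnu (hall u (Relation.EqvGen.trans _ _ _ hww' hu))
end

section
/- Let A and A_K be TGBAs over the same alphabet of valuations with disjoint acceptance mark sets. For a transition t = (q,f,a,q') of A, let TG(t) be the union of the labels f_k over all transitions (k, f_k, a_k, k') of A_K such that the product transition ((q,k), f ∩ f_k, a ∪ a_k, (q',k')) occurs in some accepting run of A ⊗ A_K. Let B be the TGBA obtained from A by replacing t with (q, f ∩ TG(t), a, q'). Then L(B ⊗ A_K) = L(A ⊗ A_K). (Restricting a transition label to its transition guarantee does not change the product language.) -/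
/-- A transition-based generalized Büchi automaton (TGBA) over letters `V`,
with state type `Q` and acceptance-mark type `M`.  A transition
`(q, f, a, q')` goes from `q` to `q'`, is labeled by the set `f` of letters
that satisfy its label, and carries the set `a` of acceptance marks. -/
structure TGBA (V : Type*) (Q : Type*) (M : Type*) where
  init : Q
  Acc : Set M
  trans : Set (Q × Set V × Set M × Q)

namespace TGBA

variable {V Q Q₁ Q₂ M : Type*}

/-- `q, f, a` form a run of `A` on the word `w`. -/
def IsRun (A : TGBA V Q M) (w : ℕ → V) (q : ℕ → Q) (f : ℕ → Set V)
    (a : ℕ → Set M) : Prop :=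
  q 0 = A.init ∧ ∀ i, (q i, f i, a i, q (i + 1)) ∈ A.trans ∧ w i ∈ f i

/-- An accepting run visits each acceptance mark infinitely often. -/
def IsAccRun (A : TGBA V Q M) (w : ℕ → V) (q : ℕ → Q) (f : ℕ → Set V)
    (a : ℕ → Set M) : Prop :=
  A.IsRun w q f a ∧ ∀ m ∈ A.Acc, ∀ N, ∃ i, N ≤ i ∧ m ∈ a i

/-- The language of `A`: words on which `A` has an accepting run. -/
def Lang (A : TGBA V Q M) : Set (ℕ → V) :=
  {w | ∃ q f a, A.IsAccRun w q f a}

/-- Synchronized product of two TGBAs. -/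
def prod (A₁ : TGBA V Q₁ M) (A₂ : TGBA V Q₂ M) : TGBA V (Q₁ × Q₂) M where
  init := (A₁.init, A₂.init)
  Acc := A₁.Acc ∪ A₂.Acc
  trans := {t | ∃ q₁ f₁ a₁ q₁' q₂ f₂ a₂ q₂',
    (q₁, f₁, a₁, q₁') ∈ A₁.trans ∧ (q₂, f₂, a₂, q₂') ∈ A₂.trans ∧
    t = ((q₁, q₂), f₁ ∩ f₂, a₁ ∪ a₂, (q₁', q₂'))}

/-- The state `s` occurs at some position of some accepting run of `A`. -/
def OccursState (A : TGBA V Q M) (s : Q) : Prop :=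
  ∃ w q f a, A.IsAccRun w q f a ∧ ∃ i, q i = s

/-- The transition `t` occurs at some position of some accepting run of `A`. -/
def OccursTrans (A : TGBA V Q M) (t : Q × Set V × Set M × Q) : Prop :=
  ∃ w q f a, A.IsAccRun w q f a ∧ ∃ i, (q i, f i, a i, q (i + 1)) = t

end TGBA

/-- Knowledge-based state guarantee: the union of the labels of all
transitions of `AK` leaving a state `k` such that `(q, k)` occurs in some
accepting run of the product `A ⊗ AK`. -/
def TGBA.SG {V Q₁ Q₂ M : Type*} (A : TGBA V Q₁ M) (AK : TGBA V Q₂ M)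
    (q : Q₁) : Set V :=
  {v | ∃ k fk ak k', (A.prod AK).OccursState (q, k) ∧
    (k, fk, ak, k') ∈ AK.trans ∧ v ∈ fk}

/-- Knowledge-based transition guarantee of `t = (q, f, a, q')`: the union of
the labels `f_k` over all transitions `(k, f_k, a_k, k')` of `AK` such that
the product transition `((q,k), f ∩ f_k, a ∪ a_k, (q',k'))` occurs in some
accepting run of `A ⊗ AK`. -/
def TGBA.TG {V Q₁ Q₂ M : Type*} (A : TGBA V Q₁ M) (AK : TGBA V Q₂ M)
    (t : Q₁ × Set V × Set M × Q₁) : Set V :=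
  {v | ∃ k fk ak k', (k, fk, ak, k') ∈ AK.trans ∧
    (A.prod AK).OccursTrans
      ((t.1, k), t.2.1 ∩ fk, t.2.2.1 ∪ ak, (t.2.2.2, k')) ∧
    v ∈ fk}

/-- Restricting a transition label to its transition guarantee does not change
the product language. -/
theorem lang_prod_restrict_to_TG {V Q₁ Q₂ M : Type*}
    (A : TGBA V Q₁ M) (AK : TGBA V Q₂ M) (hdisj : Disjoint A.Acc AK.Acc)
    (q q' : Q₁) (f : Set V) (a : Set M)
    (ht : (q, f, a, q') ∈ A.trans)
    (B : TGBA V Q₁ M) (hinit : B.init = A.init) (hAcc : B.Acc = A.Acc)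
    (htrans : B.trans = (A.trans \ {(q, f, a, q')}) ∪
      {(q, f ∩ A.TG AK (q, f, a, q'), a, q')}) :
    (B.prod AK).Lang = (A.prod AK).Lang := by
  classical
  ext w
  simp only [TGBA.Lang, Set.mem_setOf_eq]
  constructor
  · rintro ⟨qs, fs, as, ⟨⟨h0, hstep⟩, hacc⟩⟩
    have hdec : ∀ i, ∃ q₁ f₁ a₁ q₁' q₂ f₂ a₂ q₂',
        (q₁, f₁, a₁, q₁') ∈ B.trans ∧ (q₂, f₂, a₂, q₂') ∈ AK.trans ∧
        (qs i, fs i, as i, qs (i + 1)) =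
          ((q₁, q₂), f₁ ∩ f₂, a₁ ∪ a₂, (q₁', q₂')) := fun i => (hstep i).1
    choose q₁ f₁ a₁ q₁' q₂ f₂ a₂ q₂' h1 h2 heq using hdec
    have hq : ∀ i, qs i = (q₁ i, q₂ i) := fun i => congrArg (·.1) (heq i)
    have hf : ∀ i, fs i = f₁ i ∩ f₂ i := fun i => congrArg (·.2.1) (heq i)
    have ha : ∀ i, as i = a₁ i ∪ a₂ i := fun i => congrArg (·.2.2.1) (heq i)
    have hq' : ∀ i, qs (i + 1) = (q₁' i, q₂' i) :=
      fun i => congrArg (·.2.2.2) (heq i)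
    set F₁ : ℕ → Set V := fun i =>
      if (q₁ i, f₁ i, a₁ i, q₁' i) ∈ A.trans then f₁ i else f with hF₁
    have key : ∀ i, (q₁ i, F₁ i, a₁ i, q₁' i) ∈ A.trans ∧ f₁ i ⊆ F₁ i := by
      intro i
      by_cases hc : (q₁ i, f₁ i, a₁ i, q₁' i) ∈ A.trans
      · have hFi : F₁ i = f₁ i := if_pos hc
        rw [hFi]
        exact ⟨hc, subset_rfl⟩
      · have hFi : F₁ i = f := if_neg hc
        have hB := h1 i
        rw [htrans] at hB
        rcases hB with hB | hB
        · exact absurd hB.1 hc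
        · simp only [Set.mem_singleton_iff, Prod.mk.injEq] at hB
          obtain ⟨e1, e2, e3, e4⟩ := hB
          rw [hFi, e1, e3, e4]
          exact ⟨ht, by rw [e2]; exact Set.inter_subset_left⟩
    refine ⟨qs, fun i => F₁ i ∩ f₂ i, as, ⟨?_, ?_⟩, ?_⟩
    · rw [h0]; simp [TGBA.prod, hinit]
    · intro i
      constructor
      · exact ⟨q₁ i, F₁ i, a₁ i, q₁' i, q₂ i, f₂ i, a₂ i, q₂' i,
          (key i).1, h2 i, by rw [hq i, ha i, hq' i]⟩
      · have hw := (hstep i).2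
        rw [hf i] at hw
        exact ⟨(key i).2 hw.1, hw.2⟩
    · intro m hm
      apply hacc
      simpa [TGBA.prod, hAcc] using hm
  · rintro ⟨qs, fs, as, ⟨⟨h0, hstep⟩, hacc⟩⟩
    have hdec : ∀ i, ∃ q₁ f₁ a₁ q₁' q₂ f₂ a₂ q₂',
        (q₁, f₁, a₁, q₁') ∈ A.trans ∧ (q₂, f₂, a₂, q₂') ∈ AK.trans ∧
        (qs i, fs i, as i, qs (i + 1)) =
          ((q₁, q₂), f₁ ∩ f₂, a₁ ∪ a₂, (q₁', q₂')) := fun i => (hstep i).1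
    choose q₁ f₁ a₁ q₁' q₂ f₂ a₂ q₂' h1 h2 heq using hdec
    have hq : ∀ i, qs i = (q₁ i, q₂ i) := fun i => congrArg (·.1) (heq i)
    have hf : ∀ i, fs i = f₁ i ∩ f₂ i := fun i => congrArg (·.2.1) (heq i)
    have ha : ∀ i, as i = a₁ i ∪ a₂ i := fun i => congrArg (·.2.2.1) (heq i)
    have hq' : ∀ i, qs (i + 1) = (q₁' i, q₂' i) :=
      fun i => congrArg (·.2.2.2) (heq i)
    set F₁ : ℕ → Set V := fun i =>
      if (q₁ i, f₁ i, a₁ i, q₁' i) = (q, f, a, q') then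
        f ∩ A.TG AK (q, f, a, q') else f₁ i with hF₁
    have key : ∀ i, (q₁ i, F₁ i, a₁ i, q₁' i) ∈ B.trans ∧ w i ∈ F₁ i := by
      intro i
      have hw := (hstep i).2
      rw [hf i] at hw
      by_cases hc : (q₁ i, f₁ i, a₁ i, q₁' i) = (q, f, a, q')
      · have hFi : F₁ i = f ∩ A.TG AK (q, f, a, q') := if_pos hc
        have hc' := hc
        simp only [Prod.mk.injEq] at hc'
        obtain ⟨e1, e2, e3, e4⟩ := hc'
        have hmem : (q₁ i, F₁ i, a₁ i, q₁' i) ∈ B.trans := by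
          rw [htrans]
          right
          rw [Set.mem_singleton_iff, hFi, e1, e3, e4]
        refine ⟨hmem, ?_⟩
        have hTG : w i ∈ A.TG AK (q, f, a, q') := by
          refine ⟨q₂ i, f₂ i, a₂ i, q₂' i, h2 i, ?_, hw.2⟩
          refine ⟨w, qs, fs, as, ⟨⟨h0, hstep⟩, hacc⟩, i, ?_⟩
          rw [hq i, hf i, ha i, hq' i, e1, e2, e3, e4]
        rw [hFi]
        exact ⟨e2 ▸ hw.1, hTG⟩
      · have hFi : F₁ i = f₁ i := if_neg hc
        rw [hFi]
        refine ⟨?_, hw.1⟩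
        rw [htrans]
        exact Or.inl ⟨h1 i, hc⟩
    refine ⟨qs, fun i => F₁ i ∩ f₂ i, as, ⟨?_, ?_⟩, ?_⟩
    · rw [h0]; simp [TGBA.prod, hinit]
    · intro i
      constructor
      · exact ⟨q₁ i, F₁ i, a₁ i, q₁' i, q₂ i, f₂ i, a₂ i, q₂' i,
          (key i).1, h2 i, by rw [hq i, ha i, hq' i]⟩
      · exact ⟨(key i).2, ((hf i ▸ (hstep i).2 : w i ∈ f₁ i ∩ f₂ i)).2⟩
    · intro m hm
      apply hacc
      simpa [TGBA.prod, hAcc] using hm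
end
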